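/- Let H and K be Hermitian n×n complex matrices with H ≤ K (i.e. K − H is positive semidefinite). Then Tr(exp H) ≤ Tr(exp K); equivalently, ∑_l exp(λ_l(H)) ≤ ∑_l exp(λ_l(K)), where λ_l(·) denote the eigenvalues listed with multiplicity. -/

import Mathlib

open scoped ComplexOrder

section PB

open NormedSpace Matrix

attribute [local instance] Matrix.linftyOpNormedAddCommGroup Matrix.linftyOpNormedRing
  Matrix.linftyOpNormedAlgebra

variable {n : Type*} [Fintype n] [DecidableEq n]

private lemma PB.entry_le (X : Matrix n n ℂ) (i j : n) : ‖X i j‖ ≤ ‖X‖ := by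
  have h1 : ‖X i j‖₊ ≤ ∑ j', ‖X i j'‖₊ :=
    Finset.single_le_sum (f := fun j' => ‖X i j'‖₊) (fun _ _ => zero_le) (Finset.mem_univ j)
  have h2 : (∑ j', ‖X i j'‖₊) ≤ ‖X‖₊ := by
    rw [Matrix.linfty_opNNNorm_def]
    exact Finset.le_sup (f := fun i => ∑ j', ‖X i j'‖₊) (Finset.mem_univ i)
  exact_mod_cast h1.trans h2

private lemma PB.trace_le (X : Matrix n n ℂ) : ‖X.trace‖ ≤ (Fintype.card n) * ‖X‖ := by
  calc ‖X.trace‖ ≤ ∑ i, ‖X i i‖ := norm_sum_le _ _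
    _ ≤ ∑ _i : n, ‖X‖ := Finset.sum_le_sum fun i _ => PB.entry_le X i i
    _ = (Fintype.card n) * ‖X‖ := by simp [Finset.card_univ, mul_comm]

private lemma PB.psd_trace_nonneg {X : Matrix n n ℂ} (hX : X.PosSemidef) : 0 ≤ X.trace.re := by
  rw [Matrix.trace, Complex.re_sum]
  refine Finset.sum_nonneg fun i _ => ?_
  exact (Complex.le_def.mp hX.diag_nonneg).1

private lemma PB.exp_psd {M : Matrix n n ℂ} (hM : M.IsHermitian) : (exp M).PosSemidef := by
  have hherm : ((2⁻¹ : ℂ) • M).IsHermitian := by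
    unfold Matrix.IsHermitian
    rw [Matrix.conjTranspose_smul, hM]
    norm_num
  have hsplit : exp M = exp ((2⁻¹ : ℂ) • M) * exp ((2⁻¹ : ℂ) • M) := by
    rw [← Matrix.exp_add_of_commute ((2⁻¹ : ℂ) • M) ((2⁻¹ : ℂ) • M) (Commute.refl _),
      ← add_smul]
    norm_num
  have h2 : exp M = (exp ((2⁻¹ : ℂ) • M))ᴴ * exp ((2⁻¹ : ℂ) • M) := by
    rw [hsplit]; congr 1
    rw [← Matrix.exp_conjTranspose, hherm]
  rw [h2]
  exact Matrix.posSemidef_conjTranspose_mul_self _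

open scoped MatrixOrder in
private lemma PB.psd_mul_trace {P B : Matrix n n ℂ} (hP : P.PosSemidef) (hB : B.PosSemidef) :
    0 ≤ (P * B).trace.re := by
  obtain ⟨X, hX, -, hXX⟩ := CFC.exists_sqrt_of_isSelfAdjoint_of_quasispectrumRestricts
    hB.isHermitian (QuasispectrumRestricts.nnreal_of_nonneg (Matrix.nonneg_iff_posSemidef.mpr hB))
  have h1 : (P * B).trace = (X * P * X).trace := by
    conv_lhs => rw [← hXX, ← Matrix.mul_assoc, Matrix.trace_mul_comm,
      ← Matrix.mul_assoc]
  have h2 : (X * P * X).PosSemidef := by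
    have := hP.mul_mul_conjTranspose_same X
    rwa [show Xᴴ = X from hX] at this
  rw [h1]
  exact PB.psd_trace_nonneg h2

private lemma PB.hasDerivAt_matrix_pow (f : ℝ → Matrix n n ℂ) (B : Matrix n n ℂ) (t : ℝ)
    (hf : HasDerivAt f B t) (k : ℕ) :
    HasDerivAt (fun s => f s ^ k)
      (∑ i ∈ Finset.range k, f t ^ i * B * f t ^ (k - 1 - i)) t := by
  induction k with
  | zero => simpa using (show HasDerivAt (fun _ : ℝ => (1 : Matrix n n ℂ)) 0 t from hasDerivAt_const t (1 : Matrix n n ℂ))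
  | succ k ih =>
    have h := ih.mul hf
    have heq : (∑ i ∈ Finset.range k, f t ^ i * B * f t ^ (k - 1 - i)) * f t + f t ^ k * B
        = ∑ i ∈ Finset.range (k+1), f t ^ i * B * f t ^ (k + 1 - 1 - i) := by
      rw [Finset.sum_mul, Finset.sum_range_succ]
      congr 1
      · refine Finset.sum_congr rfl fun i hi => ?_
        have hik : i < k := Finset.mem_range.mp hi
        rw [Matrix.mul_assoc, ← pow_succ]
        congr 2
        omega
      · simp
    have h2 : HasDerivAt (fun s => f s ^ (k+1))
        ((∑ i ∈ Finset.range k, f t ^ i * B * f t ^ (k - 1 - i)) * f t + f t ^ k * B) t := by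
      simpa [pow_succ] using (show HasDerivAt (fun s => f s ^ k * f s) _ t from h)
    rw [heq] at h2
    exact h2

private lemma PB.trace_deriv_sum (M B : Matrix n n ℂ) (k : ℕ) :
    (∑ i ∈ Finset.range k, M ^ i * B * M ^ (k - 1 - i)).trace
      = k * (M ^ (k-1) * B).trace := by
  rw [Matrix.trace_sum]
  have h : ∀ i ∈ Finset.range k,
      (M ^ i * B * M ^ (k - 1 - i)).trace = (M ^ (k-1) * B).trace := by
    intro i hi
    have hik : i < k := Finset.mem_range.mp hi
    rw [Matrix.trace_mul_comm, ← Matrix.mul_assoc, ← pow_add]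
    congr 3
    omega
  rw [Finset.sum_congr rfl h, Finset.sum_const, Finset.card_range, nsmul_eq_mul]

/-- trace-then-real-part as a continuous `ℝ`-linear map -/
private noncomputable def PB.ψ : Matrix n n ℂ →L[ℝ] ℝ :=
  Complex.reCLM.comp
    (LinearMap.toContinuousLinearMap ((Matrix.traceLinearMap n ℂ ℂ).restrictScalars ℝ))

private lemma PB.ψ_apply (X : Matrix n n ℂ) : PB.ψ X = X.trace.re := rfl

private lemma PB.hasSum_ψ (X : Matrix n n ℂ) :
    HasSum (fun k => ((k.factorial : ℝ))⁻¹ * PB.ψ (X ^ k)) (PB.ψ (exp X)) := by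
  have h := (exp_series_hasSum_exp' (𝕂 := ℂ) X).mapL PB.ψ
  convert h using 2 with k
  rw [PB.ψ_apply, PB.ψ_apply, Matrix.trace_smul]
  have h2 : ((k.factorial : ℂ))⁻¹ = Complex.ofReal ((k.factorial : ℝ)⁻¹) := by push_cast; ring
  rw [h2, smul_eq_mul, Complex.re_ofReal_mul]
  rfl

private lemma PB.hasSum_ψ_mul (X B : Matrix n n ℂ) :
    HasSum (fun k => ((k.factorial : ℝ))⁻¹ * PB.ψ (X ^ k * B)) (PB.ψ (exp X * B)) := by
  have h := ((exp_series_hasSum_exp' (𝕂 := ℂ) X).mul_right B).mapL PB.ψ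
  convert h using 2 with k
  rw [smul_mul_assoc, PB.ψ_apply, PB.ψ_apply, Matrix.trace_smul]
  have h2 : ((k.factorial : ℂ))⁻¹ = Complex.ofReal ((k.factorial : ℝ)⁻¹) := by push_cast; ring
  rw [h2, smul_eq_mul, Complex.re_ofReal_mul]
  rfl

end PB

/-- The Peierls–Bogoliubov inequality (11.4) in the finite-dimensional case:
if `H ≤ K` in the Loewner order (i.e. `K − H` is positive semidefinite), then
`Tr(exp H) ≤ Tr(exp K)`. -/
theorem trace_exp_monotone {n : Type*} [Fintype n] [DecidableEq n]
    (H K : Matrix n n ℂ) (hH : H.IsHermitian) (hK : K.IsHermitian)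
    (hle : (K - H).PosSemidef) :
    ((NormedSpace.exp H).trace).re ≤ ((NormedSpace.exp K).trace).re := by
  letI : NormedAddCommGroup (Matrix n n ℂ) := Matrix.linftyOpNormedAddCommGroup
  letI : NormedRing (Matrix n n ℂ) := Matrix.linftyOpNormedRing
  letI : NormedAlgebra ℂ (Matrix n n ℂ) := Matrix.linftyOpNormedAlgebra
  set B : Matrix n n ℂ := K - H with hBdef
  have hB : B.PosSemidef := hle
  -- the path of matrices
  set M : ℝ → Matrix n n ℂ := fun t => H + (t : ℝ) • B with hMdef
  have hMherm : ∀ t : ℝ, (M t).IsHermitian := by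
    intro t
    unfold M
    unfold Matrix.IsHermitian
    rw [Matrix.conjTranspose_add, Matrix.conjTranspose_smul, hH.eq]
    congr 1
    rw [hB.1.eq, star_trivial]
  have hMderiv : ∀ t : ℝ, HasDerivAt M B t := by
    intro t
    have : HasDerivAt (fun s : ℝ => s • B) ((1:ℝ) • B) t :=
      (hasDerivAt_id t).smul_const B
    have h1 := this.const_add H
    simp only [one_smul] at h1
    exact h1
  -- the summand functions and their derivatives
  set g : ℕ → ℝ → ℝ := fun k t => ((k.factorial : ℝ))⁻¹ * PB.ψ ((M t) ^ k) with hgdef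
  set g' : ℕ → ℝ → ℝ := fun k t =>
    if k = 0 then 0 else (((k-1).factorial : ℝ))⁻¹ * PB.ψ ((M t) ^ (k-1) * B) with hg'def
  have hfact_ne : ∀ k : ℕ, ((k.factorial : ℝ)) ≠ 0 := fun k => by
    exact_mod_cast k.factorial_ne_zero
  -- each g k is differentiable with derivative g' k
  have hgderiv : ∀ (k : ℕ) (t : ℝ), HasDerivAt (g k) (g' k t) t := by
    intro k t
    have hpow := PB.hasDerivAt_matrix_pow M B t (hMderiv t) k
    have hcomp := (PB.ψ.hasFDerivAt.comp_hasDerivAt t hpow).const_mul ((k.factorial : ℝ))⁻¹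
    have hψD : PB.ψ (∑ i ∈ Finset.range k, M t ^ i * B * M t ^ (k - 1 - i))
        = (k : ℝ) * PB.ψ (M t ^ (k-1) * B) := by
      rw [PB.ψ_apply, PB.ψ_apply, PB.trace_deriv_sum]
      have : ((k : ℂ)) = Complex.ofReal ((k : ℝ)) := by push_cast; ring
      rw [this, Complex.re_ofReal_mul]
    erw [hψD] at hcomp
    have harith : ((k.factorial : ℝ))⁻¹ * ((k : ℝ) * PB.ψ (M t ^ (k-1) * B)) = g' k t := by
      rcases k with _ | j
      · simp [hg'def]
      · simp only [hg'def, Nat.succ_ne_zero, if_false, Nat.add_sub_cancel]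
        rw [Nat.factorial_succ]
        push_cast
        field_simp
    rw [harith] at hcomp
    exact hcomp
  -- uniform bounds on an interval
  set R : ℝ := ‖H‖ + 2 * ‖B‖ with hRdef
  have hR0 : 0 ≤ R := by positivity
  set C : ℝ := (Fintype.card n : ℝ) * ‖B‖ with hCdef
  set u : ℕ → ℝ := fun k => if k = 0 then 0 else C * (R ^ (k-1) / ((k-1).factorial : ℝ)) with hudef
  have hu : Summable u := by
    have hS : Summable (fun k : ℕ => C * (R ^ k / (k.factorial : ℝ))) :=
      (Real.summable_pow_div_factorial R).mul_left C
    have : (fun k : ℕ => u (k + 1)) = fun k : ℕ => C * (R ^ k / (k.factorial : ℝ)) := by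
      funext k
      simp [hudef]
    exact (summable_nat_add_iff 1).mp (this ▸ hS)
  have hMbound : ∀ t ∈ Set.Ioo (-1 : ℝ) 2, ‖M t‖ ≤ R := by
    intro t ht
    have : ‖M t‖ ≤ ‖H‖ + ‖t • B‖ := norm_add_le _ _
    refine this.trans ?_
    rw [norm_smul]
    have ht2 : ‖t‖ ≤ 2 := by
      rw [Real.norm_eq_abs, abs_le]
      constructor <;> [linarith [ht.1]; linarith [ht.2]]
    have := mul_le_mul_of_nonneg_right ht2 (norm_nonneg B)
    simp only [hRdef]
    linarith
  have hbound : ∀ (k : ℕ) (t : ℝ), t ∈ Set.Ioo (-1 : ℝ) 2 → ‖g' k t‖ ≤ u k := by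
    intro k t ht
    rcases k with _ | j
    · simp [hg'def, hudef]
    · simp only [hg'def, hudef, Nat.succ_ne_zero, if_false, Nat.add_sub_cancel]
      rw [Real.norm_eq_abs, abs_mul, abs_inv, abs_of_nonneg (by positivity : (0:ℝ) ≤ (j.factorial : ℝ))]
      have htrace : |PB.ψ (M t ^ j * B)| ≤ C * R ^ j := by
        rw [PB.ψ_apply]
        have h1 : |((M t ^ j * B).trace).re| ≤ ‖(M t ^ j * B).trace‖ := Complex.abs_re_le_norm _
        have h2 : ‖(M t ^ j * B).trace‖ ≤ (Fintype.card n : ℝ) * ‖M t ^ j * B‖ := PB.trace_le _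
        have h34 : ‖M t ^ j * B‖ ≤ R ^ j * ‖B‖ := by
          rcases Nat.eq_zero_or_pos j with hj | hj
          · subst hj; simp
          · have h4 : ‖M t ^ j‖ ≤ R ^ j :=
              (norm_pow_le' _ hj).trans (pow_le_pow_left₀ (norm_nonneg _) (hMbound t ht) j)
            exact (norm_mul_le _ _).trans (mul_le_mul_of_nonneg_right h4 (norm_nonneg _))
        calc |((M t ^ j * B).trace).re| ≤ (Fintype.card n : ℝ) * ‖M t ^ j * B‖ := h1.trans h2
          _ ≤ (Fintype.card n : ℝ) * (R ^ j * ‖B‖) :=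
              mul_le_mul_of_nonneg_left h34 (by positivity)
          _ = C * R ^ j := by rw [hCdef]; ring
      calc ((j.factorial : ℝ))⁻¹ * |PB.ψ (M t ^ j * B)| ≤ ((j.factorial : ℝ))⁻¹ * (C * R ^ j) := by
            exact mul_le_mul_of_nonneg_left htrace (by positivity)
        _ = C * (R ^ j / (j.factorial : ℝ)) := by rw [div_eq_mul_inv]; ring
  -- summability at the base point
  have hg0 : Summable (fun k => g k 0) := (PB.hasSum_ψ (M 0)).summable
  -- derivative of the sum
  set F : ℝ → ℝ := fun t => ∑' k, g k t with hFdef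
  have hF : ∀ t ∈ Set.Ioo (-1 : ℝ) 2, HasDerivAt F (∑' k, g' k t) t := by
    intro t ht
    exact hasDerivAt_tsum_of_isPreconnected hu isOpen_Ioo (convex_Ioo _ _).isPreconnected
      (fun k y _ => hgderiv k y) hbound (by norm_num : (0:ℝ) ∈ Set.Ioo (-1:ℝ) 2) hg0 ht
  -- the derivative is nonnegative
  have hF'nonneg : ∀ t : ℝ, 0 ≤ ∑' k, g' k t := by
    intro t
    have h1 : HasSum (fun k => g' (k+1) t) (PB.ψ (NormedSpace.exp (M t) * B)) := by
      have h0 := PB.hasSum_ψ_mul (M t) B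
      have heq : (fun k => g' (k+1) t) = fun k => ((k.factorial : ℝ))⁻¹ * PB.ψ (M t ^ k * B) := by
        funext k; simp [hg'def]
      rw [heq]; exact h0
    have h2 : HasSum (fun k => g' k t) (PB.ψ (NormedSpace.exp (M t) * B)) := by
      have h3 := (hasSum_nat_add_iff (f := fun k => g' k t) 1).mp h1
      simpa [hg'def] using h3
    rw [h2.tsum_eq, PB.ψ_apply]
    exact PB.psd_mul_trace (PB.exp_psd (hMherm t)) hB
  -- endpoints
  have hF0 : F 0 = ((NormedSpace.exp H).trace).re := by
    have : M 0 = H := by simp [hMdef]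
    rw [hFdef]
    rw [← this]; exact (PB.hasSum_ψ (M 0)).tsum_eq
  have hF1 : F 1 = ((NormedSpace.exp K).trace).re := by
    have : M 1 = K := by simp [hMdef, hBdef]
    rw [hFdef]
    rw [← this]; exact (PB.hasSum_ψ (M 1)).tsum_eq
  -- mean value theorem
  have hIcc : Set.Icc (0:ℝ) 1 ⊆ Set.Ioo (-1:ℝ) 2 := by
    intro x hx
    exact ⟨by linarith [hx.1], by linarith [hx.2]⟩
  have hcont : ContinuousOn F (Set.Icc 0 1) := fun x hx =>
    (hF x (hIcc hx)).continuousAt.continuousWithinAt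
  have hmvt := exists_hasDerivAt_eq_slope F (fun t => ∑' k, g' k t) one_pos hcont
    (fun x hx => hF x (hIcc ⟨hx.1.le, hx.2.le⟩))
  obtain ⟨c, _, hc⟩ := hmvt
  have : 0 ≤ (F 1 - F 0) / (1 - 0) := hc ▸ hF'nonneg c
  rw [← hF0, ← hF1]
  simp only [sub_zero, div_one] at this
  linarith
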